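/- arXiv:1607.00945 — 2 statements merged into one kernel-verified Lean document; each statement's English description precedes it below -/
import Mathlib

section
/- For any connected graph G on n vertices, the treedepth of G is at most (treewidth of G + 1) · log₂(n + 1). -/
/-- `r u v` means "`u` is an ancestor of `v` or equal to `v`" in a rooted forest:
a partial order in which the set of ancestors of any element forms a chain. -/
def IsForestOrder {V : Type*} (r : V → V → Prop) : Prop :=
  (∀ v, r v v) ∧ (∀ u v w, r u v → r v w → r u w) ∧ (∀ u v, r u v → r v u → u = v) ∧
    (∀ u v w, r u w → r v w → (r u v ∨ r v u))

/-- The height of the forest is at most `h`: every chain has at most `h` vertices. -/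
def ForestHeightLE {V : Type*} (r : V → V → Prop) (h : ℕ) : Prop :=
  ∀ s : Finset V, (∀ u ∈ s, ∀ v ∈ s, r u v ∨ r v u) → s.card ≤ h

/-- `G` has treedepth at most `h`. -/
def TreedepthLE {V : Type*} (G : SimpleGraph V) (h : ℕ) : Prop :=
  ∃ r : V → V → Prop, IsForestOrder r ∧ (∀ u v, G.Adj u v → (r u v ∨ r v u)) ∧
    ForestHeightLE r h

/-- `(T, bags)` is a tree decomposition of `G`. -/
def IsTreeDecomp {V : Type*} {ι : Type*} (G : SimpleGraph V) (T : SimpleGraph ι)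
    (bags : ι → Finset V) : Prop :=
  T.Connected ∧ T.IsAcyclic ∧
    (∀ v : V, ∃ i, v ∈ bags i) ∧
    (∀ u v : V, G.Adj u v → ∃ i, u ∈ bags i ∧ v ∈ bags i) ∧
    (∀ v : V, (SimpleGraph.induce {i : ι | v ∈ bags i} T).Connected)

/-- `G` has treewidth at most `w`: it has a tree decomposition of width at most `w`. -/
def TreewidthLE {V : Type*} (G : SimpleGraph V) (w : ℕ) : Prop :=
  ∃ (ι : Type) (T : SimpleGraph ι) (bags : ι → Finset V),
    IsTreeDecomp G T bags ∧ ∀ i, (bags i).card ≤ w + 1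

section Aux
open SimpleGraph

universe u

variable {V : Type u} {ι : Type*}

/-- Reachability in `G` along walks avoiding the set `S`. -/
def AReach (G : SimpleGraph V) (S : Finset V) (u v : V) : Prop :=
  ∃ p : G.Walk u v, ∀ x ∈ p.support, x ∉ S

lemma AReach.not_mem_left {G : SimpleGraph V} {S : Finset V} {u v : V}
    (h : AReach G S u v) : u ∉ S := by
  obtain ⟨p, hp⟩ := h; exact hp u p.start_mem_support

lemma AReach.not_mem_right {G : SimpleGraph V} {S : Finset V} {u v : V}
    (h : AReach G S u v) : v ∉ S := by
  obtain ⟨p, hp⟩ := h; exact hp v p.end_mem_support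

lemma AReach.refl {G : SimpleGraph V} {S : Finset V} {u : V} (h : u ∉ S) :
    AReach G S u u :=
  ⟨Walk.nil, by simpa using h⟩

lemma AReach.symm {G : SimpleGraph V} {S : Finset V} {u v : V}
    (h : AReach G S u v) : AReach G S v u := by
  obtain ⟨p, hp⟩ := h
  refine ⟨p.reverse, ?_⟩
  intro x hx
  rw [Walk.support_reverse] at hx
  exact hp x (List.mem_reverse.mp hx)

lemma AReach.trans {G : SimpleGraph V} {S : Finset V} {u v w : V}
    (h1 : AReach G S u v) (h2 : AReach G S v w) : AReach G S u w := by
  obtain ⟨p, hp⟩ := h1; obtain ⟨q, hq⟩ := h2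
  refine ⟨p.append q, ?_⟩
  intro x hx
  rw [Walk.support_append] at hx
  rcases List.mem_append.mp hx with h | h
  · exact hp x h
  · exact hq x (List.mem_of_mem_tail h)

lemma AReach.of_adj {G : SimpleGraph V} {S : Finset V} {u v : V}
    (h : G.Adj u v) (hu : u ∉ S) (hv : v ∉ S) : AReach G S u v := by
  refine ⟨Walk.cons h Walk.nil, ?_⟩
  intro x hx
  simp only [Walk.support_cons, Walk.support_nil, List.mem_cons, List.mem_singleton] at hx
  rcases hx with rfl | hx | hx
  · exact hu
  · subst hx; exact hv
  · simp at hx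

/-- The set of tree nodes reachable from `j` by walks avoiding `i`
(the "side of `j`" when `i` is removed). -/
def Tside (T : SimpleGraph ι) (i j : ι) : Set ι := {x | ∃ p : T.Walk j x, i ∉ p.support}

lemma Tside.not_self_mem (T : SimpleGraph ι) (i j : ι) : i ∉ Tside T i j := by
  rintro ⟨p, hp⟩; exact hp p.end_mem_support

lemma Tside.start_mem (T : SimpleGraph ι) {i j : ι} (h : j ≠ i) : j ∈ Tside T i j :=
  ⟨Walk.nil, by simpa using Ne.symm h⟩

lemma not_mem_side_of_adj {T : SimpleGraph ι} (hac : T.IsAcyclic) {i j1 j2 : ι}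
    (h12 : T.Adj j1 j2) (h1i : T.Adj j1 i) (hne : i ≠ j2) : i ∉ Tside T j1 j2 := by
  classical
  rintro ⟨q, hq⟩
  have hq' : j1 ∉ q.bypass.support := fun h => hq (q.support_bypass_subset h)
  have hpA : (Walk.cons h12 q.bypass).IsPath := q.bypass_isPath.cons hq'
  have := hac.path_unique ⟨Walk.cons h12 q.bypass, hpA⟩ (Path.singleton h1i)
  have hsupp : j2 ∈ (Path.singleton h1i : T.Path j1 i).val.support := by
    rw [← this]
    simp [Walk.support_cons]
  simp only [Path.singleton, Walk.support_cons, Walk.support_nil, List.mem_cons,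
    List.not_mem_nil] at hsupp
  rcases hsupp with h | h | h
  · exact h12.ne' h
  · exact hne h.symm
  · simp at h

lemma side_disjoint {T : SimpleGraph ι} (hac : T.IsAcyclic) {i j x : ι}
    (hadj : T.Adj i j) (h1 : x ∈ Tside T i j) (h2 : x ∈ Tside T j i) : False := by
  classical
  obtain ⟨p, hp⟩ := h1
  obtain ⟨q, hq⟩ := h2
  have hp' : i ∉ p.bypass.support := fun h => hp (p.support_bypass_subset h)
  have hq' : j ∉ q.bypass.support := fun h => hq (q.support_bypass_subset h)
  have hpB : (Walk.cons hadj.symm q.bypass).IsPath := q.bypass_isPath.cons hq'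
  have := hac.path_unique ⟨p.bypass, p.bypass_isPath⟩ ⟨Walk.cons hadj.symm q.bypass, hpB⟩
  have : i ∈ p.bypass.support := by
    have h' : p.bypass = Walk.cons hadj.symm q.bypass := congrArg Subtype.val this
    rw [h']
    simp only [Walk.support_cons, List.mem_cons]
    exact Or.inr q.bypass.start_mem_support
  exact hp' this

lemma step_subset {T : SimpleGraph ι} (hac : T.IsAcyclic) {i j k : ι}
    (hij : T.Adj i j) (hjk : T.Adj j k) (hki : k ≠ i) : Tside T j k ⊆ Tside T i j := by
  classical
  rintro x ⟨q, hq⟩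
  have hiq : i ∉ q.support := by
    intro hi
    have : i ∈ Tside T j k := ⟨q.takeUntil i hi, fun h => hq (q.support_takeUntil_subset _ h)⟩
    exact not_mem_side_of_adj hac hjk hij.symm (Ne.symm hki) this
  refine ⟨Walk.cons hjk q, ?_⟩
  simp only [Walk.support_cons, List.mem_cons]
  rintro (h | h)
  · exact hij.ne' h.symm
  · exact hiq h

lemma first_step {T : SimpleGraph ι} {i j : ι} (p : T.Walk i j) (hp : p.IsPath)
    (hne : j ≠ i) : ∃ j', T.Adj i j' ∧ Tside T i j ⊆ Tside T i j' := by
  cases p with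
  | nil => exact absurd rfl hne
  | @cons _ v _ h t =>
    refine ⟨v, h, ?_⟩
    have hit : i ∉ t.support := by
      have := hp.support_nodup
      simp only [Walk.support_cons, List.nodup_cons] at this
      exact this.1
    rintro x ⟨r, hr⟩
    refine ⟨t.append r, ?_⟩
    rw [Walk.support_append]
    intro hmem
    rcases List.mem_append.mp hmem with hh | hh
    · exact hit hh
    · exact hr (List.mem_of_mem_tail hh)

lemma dist_decr {T : SimpleGraph ι} (hc : T.Connected) (hac : T.IsAcyclic) {i j a : ι}
    (hij : T.Adj i j) (ha : a ∈ Tside T i j) : T.dist j a < T.dist i a := by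
  classical
  obtain ⟨w, hw⟩ := ha
  obtain ⟨p, hlen⟩ := (hc.preconnected i a).exists_walk_length_eq_dist
  set q := p.bypass with hqdef
  have hqlen : q.length ≤ T.dist i a := hlen ▸ p.length_bypass_le
  have hj : j ∈ q.support := by
    by_contra hj
    have hw' : i ∉ w.bypass.support := fun h => hw (w.support_bypass_subset h)
    have hpB : (Walk.cons hij w.bypass).IsPath := w.bypass_isPath.cons hw'
    have := hac.path_unique ⟨q, p.bypass_isPath⟩ ⟨Walk.cons hij w.bypass, hpB⟩
    have : j ∈ q.support := by
      have h' : q = Walk.cons hij w.bypass := congrArg Subtype.val this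
      rw [h']
      simp only [Walk.support_cons, List.mem_cons]
      exact Or.inr w.bypass.start_mem_support
    exact hj this
  have hsplit : (q.takeUntil j hj).length + (q.dropUntil j hj).length = q.length := by
    conv_rhs => rw [← q.take_spec hj]
    rw [Walk.length_append]
  have ht1 : 1 ≤ (q.takeUntil j hj).length := by
    by_contra h
    push_neg at h
    interval_cases h' : (q.takeUntil j hj).length
    exact hij.ne (Walk.eq_of_length_eq_zero h')
  have hd : T.dist j a ≤ (q.dropUntil j hj).length := dist_le _
  omega

lemma Tside.self_empty {T : SimpleGraph ι} {i x : ι} : x ∉ Tside T i i := by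
  rintro ⟨p, hp⟩; exact hp p.start_mem_support

lemma walk_in_bags {T : SimpleGraph ι} {bags : ι → Finset V}
    (h5 : ∀ v : V, (SimpleGraph.induce {i : ι | v ∈ bags i} T).Connected)
    (v : V) {a b : ι} (ha : v ∈ bags a) (hb : v ∈ bags b) :
    ∃ q : T.Walk a b, ∀ x ∈ q.support, v ∈ bags x := by
  obtain ⟨p⟩ := (h5 v).preconnected ⟨a, ha⟩ ⟨b, hb⟩
  refine ⟨p.map (SimpleGraph.Embedding.induce _).toHom, ?_⟩
  intro x hx
  erw [Walk.support_map] at hx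
  obtain ⟨y, hy, rfl⟩ := List.mem_map.mp hx
  exact y.2

lemma chain_walk {G : SimpleGraph V} {T : SimpleGraph ι} {bags : ι → Finset V}
    (htd : IsTreeDecomp G T bags) (i : ι) :
    ∀ {u v : V} (p : G.Walk u v), (∀ x ∈ p.support, x ∉ bags i) →
      ∀ {a b : ι}, u ∈ bags a → v ∈ bags b → ∃ q : T.Walk a b, i ∉ q.support := by
  obtain ⟨-, -, -, h4, h5⟩ := htd
  intro u v p
  induction p with
  | nil =>
    intro hp a b ha hb
    obtain ⟨q, hq⟩ := walk_in_bags h5 _ ha hb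
    exact ⟨q, fun h => hp _ (by simp) (hq i h)⟩
  | @cons u u' v h t ih =>
    intro hp a b ha hb
    have hu : u ∉ bags i := hp u (by simp)
    obtain ⟨c, hc1, hc2⟩ := h4 _ _ h
    obtain ⟨q1, hq1⟩ := walk_in_bags h5 u ha hc1
    obtain ⟨q2, hq2⟩ := ih (fun x hx => hp x (by
      simp only [Walk.support_cons, List.mem_cons]; exact Or.inr hx)) hc2 hb
    refine ⟨q1.append q2, ?_⟩
    rw [Walk.support_append]
    intro hmem
    rcases List.mem_append.mp hmem with hh | hh
    · exact hu (hq1 i hh)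
    · exact hq2 (List.mem_of_mem_tail hh)

/-- The balanced-separator (centroid bag) lemma. -/
lemma centroid [Fintype V] [Nonempty V] {ι : Type} {G : SimpleGraph V}
    {T : SimpleGraph ι} {bags : ι → Finset V} (htd : IsTreeDecomp G T bags) :
    ∃ i₀ : ι, ∀ u : V, u ∉ bags i₀ →
      2 * {v : V | AReach G (bags i₀) u v}.ncard ≤ Fintype.card V := by
  classical
  obtain ⟨hc, hac, h3, h4, h5⟩ := id htd
  set m := Fintype.card V with hm
  have hm1 : 1 ≤ m := Fintype.card_pos
  set W : ι → ι → Finset V := fun i j =>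
    Finset.univ.filter (fun v => v ∉ bags i ∧ ∀ b, v ∈ bags b → b ∈ Tside T i j) with hWdef
  have hWmem : ∀ {i j : ι} {v : V},
      v ∈ W i j ↔ (v ∉ bags i ∧ ∀ b, v ∈ bags b → b ∈ Tside T i j) := by
    intro i j v; simp [hWdef]
  have hcent : ∃ i₀ : ι, ∀ j, ¬ (m < 2 * (W i₀ j).card) := by
    by_contra hno
    push_neg at hno
    -- upgrade a heavy side to a heavy side along a neighbor
    have hnbr : ∀ i : ι, ∃ j, T.Adj i j ∧ m < 2 * (W i j).card := by
      intro i
      obtain ⟨j, hj⟩ := hno i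
      have hji : j ≠ i := by
        rintro rfl
        have hempty : W j j = ∅ := by
          ext v
          simp only [hWmem, Finset.notMem_empty, iff_false, not_and]
          intro hv hall
          obtain ⟨b, hb⟩ := h3 v
          exact Tside.self_empty (hall b hb)
        rw [hempty] at hj
        simp at hj
      obtain ⟨p0⟩ := hc.preconnected i j
      obtain ⟨j', hadj, hsub⟩ := first_step p0.toPath.1 p0.toPath.2 hji
      refine ⟨j', hadj, ?_⟩
      have : W i j ⊆ W i j' := by
        intro v hv
        rw [hWmem] at hv ⊢
        exact ⟨hv.1, fun b hb => hsub (hv.2 b hb)⟩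
      have := Finset.card_le_card this
      omega
    have hdisj : ∀ i j : ι, T.Adj i j → m < 2 * (W i j).card → m < 2 * (W j i).card →
        False := by
      intro i j hadj h1 h2
      have hint : Disjoint (W i j) (W j i) := by
        rw [Finset.disjoint_left]
        intro v hv1 hv2
        obtain ⟨b, hb⟩ := h3 v
        exact side_disjoint hac hadj ((hWmem.mp hv1).2 b hb) ((hWmem.mp hv2).2 b hb)
      have : (W i j).card + (W j i).card ≤ m := by
        rw [← Finset.card_union_of_disjoint hint]
        exact Finset.card_le_univ _
      omega
    have hWstep : ∀ i j k : ι, T.Adj i j → T.Adj j k → m < 2 * (W i j).card →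
        m < 2 * (W j k).card → W j k ⊆ W i j := by
      intro i j k hij hjk hHij hHjk
      have hki : k ≠ i := by
        rintro rfl
        exact hdisj _ _ hij hHij hHjk
      have hsub := step_subset hac hij hjk hki
      have hiTs : i ∉ Tside T j k := not_mem_side_of_adj hac hjk hij.symm (Ne.symm hki)
      intro v hv
      rw [hWmem] at hv ⊢
      obtain ⟨hvj, hall⟩ := hv
      exact ⟨fun hvi => hiTs (hall i hvi), fun b hb => hsub (hall b hb)⟩
    choose f hf1 hf2 using hnbr
    obtain ⟨i0, -⟩ := h3 (Classical.arbitrary V)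
    set seq : ℕ → ι := fun k => f^[k] i0 with hseqdef
    have hseq : ∀ k, seq (k + 1) = f (seq k) := fun k =>
      Function.iterate_succ_apply' f k i0
    set Ws : ℕ → Finset V := fun k => W (seq k) (seq (k + 1)) with hWsdef
    have haveA : ∀ k, T.Adj (seq k) (seq (k + 1)) := by
      intro k; rw [hseq k]; exact hf1 _
    have haveB : ∀ k, m < 2 * (Ws k).card := by
      intro k; show m < 2 * (W (seq k) (seq (k+1))).card; rw [hseq k]; exact hf2 _
    have hWs_sub : ∀ k, Ws (k + 1) ⊆ Ws k := by
      intro k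
      have b1 : m < 2 * (W (seq k) (seq (k+1))).card := haveB k
      have b2 : m < 2 * (W (seq (k+1)) (seq (k+2))).card := haveB (k+1)
      exact hWstep _ _ _ (haveA k) (haveA (k+1)) b1 b2
    obtain ⟨K, hK⟩ : ∃ K, ∀ k, K ≤ k → Ws k = Ws K := by
      have hne : (Set.range fun k => (Ws k).card).Nonempty := ⟨(Ws 0).card, ⟨0, rfl⟩⟩
      obtain ⟨K, hgK⟩ := Nat.sInf_mem hne
      refine ⟨K, fun k hk => ?_⟩
      have hsub : Ws k ⊆ Ws K := by
        induction k, hk using Nat.le_induction with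
        | base => exact subset_rfl
        | succ n hn ih => exact (hWs_sub n).trans ih
      refine Finset.eq_of_subset_of_card_le hsub ?_
      have h1 : (Ws K).card = sInf (Set.range fun k => (Ws k).card) := hgK
      rw [h1]
      exact Nat.sInf_le ⟨k, rfl⟩
    obtain ⟨v, hv⟩ : (Ws K).Nonempty := by
      have := haveB K
      rw [← Finset.card_pos]
      omega
    obtain ⟨aN, haN⟩ := h3 v
    have hside : ∀ d, aN ∈ Tside T (seq (K + d)) (seq (K + d + 1)) := by
      intro d
      have hvmem : v ∈ Ws (K + d) := by rw [hK (K + d) (Nat.le_add_right _ _)]; exact hv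
      exact (hWmem.mp hvmem).2 aN haN
    have hdec : ∀ d, T.dist (seq (K + d + 1)) aN < T.dist (seq (K + d)) aN := fun d =>
      dist_decr hc hac (haveA (K + d)) (hside d)
    have hbound : ∀ d, T.dist (seq (K + d)) aN + d ≤ T.dist (seq K) aN := by
      intro d
      induction d with
      | zero => simp
      | succ n ih =>
        have h1 := hdec n
        have e : K + (n + 1) = K + n + 1 := by omega
        rw [e]
        omega
    have := hbound (T.dist (seq K) aN + 1)
    omega
  obtain ⟨i₀, hgood⟩ := hcent
  refine ⟨i₀, fun u hu => ?_⟩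
  obtain ⟨a, ha⟩ := h3 u
  have hsub : {v : V | AReach G (bags i₀) u v}.toFinset ⊆ W i₀ a := by
    intro v hv
    rw [Set.mem_toFinset] at hv
    rw [hWmem]
    obtain ⟨p, hp⟩ := hv
    exact ⟨hp v p.end_mem_support, fun b hb => chain_walk htd i₀ p hp ha hb⟩
  have h2 : 2 * (W i₀ a).card ≤ m := by have := hgood a; omega
  rw [Set.ncard_eq_toFinset_card']
  have := Finset.card_le_card hsub
  omega




lemma td_mono {G : SimpleGraph V} {a b : ℕ} (h : TreedepthLE G a) (hab : a ≤ b) :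
    TreedepthLE G b := by
  obtain ⟨r, h1, h2, h3⟩ := h
  exact ⟨r, h1, h2, fun s hs => le_trans (h3 s hs) hab⟩

lemma tw_restrict {G : SimpleGraph V} {w : ℕ} (hw : TreewidthLE G w) (s : Set V) :
    TreewidthLE (G.induce s) w := by
  classical
  obtain ⟨ι, T, bags, ⟨h1, h2, h3, h4, h5⟩, hcard⟩ := hw
  refine ⟨ι, T, fun i => (bags i).subtype (· ∈ s), ⟨h1, h2, ?_, ?_, ?_⟩, ?_⟩
  · intro v
    obtain ⟨i, hi⟩ := h3 ↑v
    exact ⟨i, Finset.mem_subtype.mpr hi⟩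
  · intro u v hadj
    have hGadj : G.Adj ↑u ↑v := hadj
    obtain ⟨i, hu, hv⟩ := h4 _ _ hGadj
    exact ⟨i, Finset.mem_subtype.mpr hu, Finset.mem_subtype.mpr hv⟩
  · intro v
    have he : {i : ι | v ∈ (bags i).subtype (· ∈ s)} = {i : ι | ↑v ∈ bags i} := by
      ext i; simp [Finset.mem_subtype]
    rw [he]
    exact h5 ↑v
  · intro i
    calc ((bags i).subtype (· ∈ s)).card = ((bags i).filter (· ∈ s)).card :=
        Finset.card_subtype _ _
      _ ≤ (bags i).card := Finset.card_filter_le _ _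
      _ ≤ w + 1 := hcard i

/-- An arbitrary linear-order-like relation from the well-ordering principle. -/
def linLe {α : Type*} (a b : α) : Prop := WellOrderingRel a b ∨ a = b

lemma linLe_refl {α : Type*} (a : α) : linLe a a := Or.inr rfl

lemma linLe_trans {α : Type*} {a b c : α} (h1 : linLe a b) (h2 : linLe b c) :
    linLe a c := by
  rcases h1 with h1 | rfl
  · rcases h2 with h2 | rfl
    · exact Or.inl (IsTrans.trans _ _ _ h1 h2)
    · exact Or.inl h1
  · exact h2

lemma linLe_antisymm {α : Type*} {a b : α} (h1 : linLe a b) (h2 : linLe b a) :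
    a = b := by
  rcases h1 with h1 | rfl
  · rcases h2 with h2 | rfl
    · exact absurd h2 (asymm h1)
    · rfl
  · rfl

lemma linLe_total {α : Type*} (a b : α) : linLe a b ∨ linLe b a := by
  rcases trichotomous_of WellOrderingRel a b with h | rfl | h
  · exact Or.inl (Or.inl h)
  · exact Or.inl (Or.inr rfl)
  · exact Or.inr (Or.inl h)

/-- The component of `u` in `G - S`. -/
def cls (G : SimpleGraph V) (S : Finset V) (u : V) : Set V := {v | AReach G S u v}

lemma cls_eq {G : SimpleGraph V} {S : Finset V} {u v : V} (h : AReach G S u v) :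
    cls G S u = cls G S v :=
  Set.ext fun _ => ⟨fun hx => h.symm.trans hx, fun hx => h.trans hx⟩

/-- The chosen forest order of an induced subgraph, transported to `V`. -/
def Fr (G : SimpleGraph V) (h' : ℕ) (s : Set V) (x y : V) : Prop :=
  ∃ (hs : TreedepthLE (G.induce s) h') (hx : x ∈ s) (hy : y ∈ s),
    Classical.choose hs ⟨x, hx⟩ ⟨y, hy⟩

lemma Fr_congr {G : SimpleGraph V} {h' : ℕ} {s t : Set V} (h : s = t) {x y : V}
    (hf : Fr G h' s x y) : Fr G h' t x y := h ▸ hf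

/-- The glued forest order: the separator `S` on top (linearly ordered), with the
forest orders of the components of `G - S` below. -/
def glueRel (G : SimpleGraph V) (S : Finset V) (h' : ℕ) (u v : V) : Prop :=
  (u ∈ S ∧ v ∈ S ∧ linLe u v) ∨ (u ∈ S ∧ v ∉ S) ∨
    (u ∉ S ∧ v ∉ S ∧ Fr G h' (cls G S u) u v)

lemma glue (G : SimpleGraph V) (S : Finset V) (h' : ℕ)
    (hpart : ∀ u : V, u ∉ S → TreedepthLE (G.induce (cls G S u)) h') :
    TreedepthLE G (S.card + h') := by
  classical
  have hclsu : ∀ {u : V}, u ∉ S → u ∈ cls G S u := fun h => AReach.refl h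
  have hFr_reach : ∀ {u x y : V}, Fr G h' (cls G S u) x y →
      AReach G S u x ∧ AReach G S u y := by
    rintro u x y ⟨hs, hx, hy, -⟩
    exact ⟨hx, hy⟩
  have hFr_refl : ∀ {u : V}, u ∉ S → Fr G h' (cls G S u) u u := by
    intro u hu
    exact ⟨hpart u hu, hclsu hu, hclsu hu,
      (Classical.choose_spec (hpart u hu)).1.1 _⟩
  have hFr_trans : ∀ {s : Set V} {x y z : V}, Fr G h' s x y → Fr G h' s y z →
      Fr G h' s x z := by
    rintro s x y z ⟨hs, hx, hy, h1⟩ ⟨hs', hy', hz, h2⟩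
    exact ⟨hs, hx, hz, (Classical.choose_spec hs).1.2.1 _ _ _ h1 h2⟩
  have hFr_anti : ∀ {s : Set V} {x y : V}, Fr G h' s x y → Fr G h' s y x →
      x = y := by
    rintro s x y ⟨hs, hx, hy, h1⟩ ⟨hs', hy', hx', h2⟩
    exact congrArg Subtype.val ((Classical.choose_spec hs).1.2.2.1 _ _ h1 h2)
  have hFr_anc : ∀ {s : Set V} {x y z : V}, Fr G h' s x z → Fr G h' s y z →
      Fr G h' s x y ∨ Fr G h' s y x := by
    rintro s x y z ⟨hs, hx, hz, h1⟩ ⟨hs2, hy, hz2, h2⟩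
    rcases (Classical.choose_spec hs).1.2.2.2 ⟨x, hx⟩ ⟨y, hy⟩ ⟨z, hz⟩ h1 h2 with h | h
    · exact Or.inl ⟨hs, hx, hy, h⟩
    · exact Or.inr ⟨hs, hy, hx, h⟩
  have hFr_adj : ∀ {u x y : V}, u ∉ S → G.Adj x y → x ∈ cls G S u → y ∈ cls G S u →
      Fr G h' (cls G S u) x y ∨ Fr G h' (cls G S u) y x := by
    intro u x y hu hadj hx hy
    have hs := hpart u hu
    have hind : (G.induce (cls G S u)).Adj ⟨x, hx⟩ ⟨y, hy⟩ := hadj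
    rcases (Classical.choose_spec hs).2.1 _ _ hind with h | h
    · exact Or.inl ⟨hs, hx, hy, h⟩
    · exact Or.inr ⟨hs, hy, hx, h⟩
  refine ⟨glueRel G S h', ⟨?_, ?_, ?_, ?_⟩, ?_, ?_⟩
  · -- refl
    intro v
    by_cases hv : v ∈ S
    · exact Or.inl ⟨hv, hv, linLe_refl v⟩
    · exact Or.inr (Or.inr ⟨hv, hv, hFr_refl hv⟩)
  · -- trans
    intro u v w huv hvw
    rcases huv with ⟨hu, hv, hle⟩ | ⟨hu, hv⟩ | ⟨hu, hv, hF⟩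
    · rcases hvw with ⟨hv2, hw, hle2⟩ | ⟨hv2, hw⟩ | ⟨hv2, hw, hF2⟩
      · exact Or.inl ⟨hu, hw, linLe_trans hle hle2⟩
      · exact Or.inr (Or.inl ⟨hu, hw⟩)
      · exact absurd hv hv2
    · rcases hvw with ⟨hv2, hw, hle2⟩ | ⟨hv2, hw⟩ | ⟨hv2, hw, hF2⟩
      · exact absurd hv2 hv
      · exact absurd hv2 hv
      · exact Or.inr (Or.inl ⟨hu, hw⟩)
    · rcases hvw with ⟨hv2, hw, hle2⟩ | ⟨hv2, hw⟩ | ⟨hv2, hw, hF2⟩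
      · exact absurd hv2 hv
      · exact absurd hv2 hv
      · have hUV : AReach G S u v := (hFr_reach hF).2
        have hE : cls G S v = cls G S u := (cls_eq hUV).symm
        exact Or.inr (Or.inr ⟨hu, hw, hFr_trans hF (Fr_congr hE hF2)⟩)
  · -- antisymm
    intro u v h1 h2
    rcases h1 with ⟨hu, hv, hle⟩ | ⟨hu, hv⟩ | ⟨hu, hv, hF⟩
    · rcases h2 with ⟨hv2, hu2, hle2⟩ | ⟨hv2, hu2⟩ | ⟨hv2, hu2, hF2⟩
      · exact linLe_antisymm hle hle2
      · exact absurd hu hu2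
      · exact absurd hu hu2
    · rcases h2 with ⟨hv2, hu2, hle2⟩ | ⟨hv2, hu2⟩ | ⟨hv2, hu2, hF2⟩
      · exact absurd hv2 hv
      · exact absurd hv2 hv
      · exact absurd hu hu2
    · rcases h2 with ⟨hv2, hu2, hle2⟩ | ⟨hv2, hu2⟩ | ⟨hv2, hu2, hF2⟩
      · exact absurd hv2 hv
      · exact absurd hv2 hv
      · have hUV : AReach G S u v := (hFr_reach hF).2
        have hE : cls G S v = cls G S u := (cls_eq hUV).symm
        exact hFr_anti hF (Fr_congr hE hF2)
  · -- ancestors form a chain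
    intro u v w h1 h2
    by_cases hu : u ∈ S <;> by_cases hv : v ∈ S
    · rcases linLe_total u v with h | h
      · exact Or.inl (Or.inl ⟨hu, hv, h⟩)
      · exact Or.inr (Or.inl ⟨hv, hu, h⟩)
    · exact Or.inl (Or.inr (Or.inl ⟨hu, hv⟩))
    · exact Or.inr (Or.inr (Or.inl ⟨hv, hu⟩))
    · rcases h1 with ⟨hu2, -, -⟩ | ⟨hu2, -⟩ | ⟨-, hw, hF1⟩
      · exact absurd hu2 hu
      · exact absurd hu2 hu
      · rcases h2 with ⟨hv2, -, -⟩ | ⟨hv2, -⟩ | ⟨-, -, hF2⟩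
        · exact absurd hv2 hv
        · exact absurd hv2 hv
        · have hUW : AReach G S u w := (hFr_reach hF1).2
          have hVW : AReach G S v w := (hFr_reach hF2).2
          have hUV : AReach G S u v := hUW.trans hVW.symm
          have hE : cls G S v = cls G S u := (cls_eq hUV).symm
          rcases hFr_anc hF1 (Fr_congr hE hF2) with h | h
          · exact Or.inl (Or.inr (Or.inr ⟨hu, hv, h⟩))
          · exact Or.inr (Or.inr (Or.inr ⟨hv, hu, Fr_congr hE.symm h⟩))
  · -- adjacency
    intro u v hadj
    by_cases hu : u ∈ S <;> by_cases hv : v ∈ S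
    · rcases linLe_total u v with h | h
      · exact Or.inl (Or.inl ⟨hu, hv, h⟩)
      · exact Or.inr (Or.inl ⟨hv, hu, h⟩)
    · exact Or.inl (Or.inr (Or.inl ⟨hu, hv⟩))
    · exact Or.inr (Or.inr (Or.inl ⟨hv, hu⟩))
    · have hxy : AReach G S u v := AReach.of_adj hadj hu hv
      rcases hFr_adj hu hadj (hclsu hu) hxy with h | h
      · exact Or.inl (Or.inr (Or.inr ⟨hu, hv, h⟩))
      · exact Or.inr (Or.inr (Or.inr ⟨hv, hu, Fr_congr (cls_eq hxy) h⟩))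
  · -- height
    intro s hs
    have hcard : (s.filter (· ∈ S)).card + (s.filter (· ∉ S)).card = s.card :=
      Finset.card_filter_add_card_filter_not (p := (· ∈ S))
    have h1 : (s.filter (· ∈ S)).card ≤ S.card :=
      Finset.card_le_card (fun x hx => (Finset.mem_filter.mp hx).2)
    have h2 : (s.filter (· ∉ S)).card ≤ h' := by
      set s2 := s.filter (· ∉ S) with hs2def
      rcases Finset.eq_empty_or_nonempty s2 with he | ⟨u₀, hu₀⟩
      · simp [he]
      · have hu₀mem := Finset.mem_filter.mp hu₀
        have hu₀s : u₀ ∈ s := hu₀mem.1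
        have hu₀S : u₀ ∉ S := hu₀mem.2
        have hs0 := hpart u₀ hu₀S
        have spec := Classical.choose_spec hs0
        have hmem : ∀ x ∈ s2, x ∈ cls G S u₀ := by
          intro x hx
          obtain ⟨hxs, hxS⟩ := Finset.mem_filter.mp hx
          rcases hs u₀ hu₀s x hxs with h | h
          · rcases h with ⟨hc, -, -⟩ | ⟨hc, -⟩ | ⟨-, -, hF⟩
            · exact absurd hc hu₀S
            · exact absurd hc hu₀S
            · exact (hFr_reach hF).2
          · rcases h with ⟨hc, -, -⟩ | ⟨hc, -⟩ | ⟨-, -, hF⟩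
            · exact absurd hc hxS
            · exact absurd hc hxS
            · exact ((hFr_reach hF).2).symm
        set t : Finset ↥(cls G S u₀) := s2.subtype (· ∈ cls G S u₀) with htdef
        have hts : t.card = s2.card := by
          rw [htdef, Finset.card_subtype]
          congr 1
          exact Finset.filter_true_of_mem hmem
        have hchain : ∀ a ∈ t, ∀ b ∈ t,
            Classical.choose hs0 a b ∨ Classical.choose hs0 b a := by
          intro a hat b hbt
          have hax : ↑a ∈ s2 := Finset.mem_subtype.mp hat
          have hbx : ↑b ∈ s2 := Finset.mem_subtype.mp hbt
          have haS : (a : V) ∉ S := (Finset.mem_filter.mp hax).2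
          have hbS : (b : V) ∉ S := (Finset.mem_filter.mp hbx).2
          have hEa : cls G S (a : V) = cls G S u₀ := (cls_eq (hmem _ hax)).symm
          have hEb : cls G S (b : V) = cls G S u₀ := (cls_eq (hmem _ hbx)).symm
          rcases hs ↑a (Finset.mem_filter.mp hax).1 ↑b (Finset.mem_filter.mp hbx).1
            with h | h
          · rcases h with ⟨hc, -, -⟩ | ⟨hc, -⟩ | ⟨-, -, hF⟩
            · exact absurd hc haS
            · exact absurd hc haS
            · obtain ⟨hs', hx', hy', hr⟩ := Fr_congr hEa hF
              exact Or.inl hr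
          · rcases h with ⟨hc, -, -⟩ | ⟨hc, -⟩ | ⟨-, -, hF⟩
            · exact absurd hc hbS
            · exact absurd hc hbS
            · obtain ⟨hs', hx', hy', hr⟩ := Fr_congr hEb hF
              exact Or.inr hr
        have := spec.2.2 t hchain
        omega
    omega

lemma main_td (w : ℕ) : ∀ (n : ℕ) (V : Type u) [Fintype V] [DecidableEq V]
    (G : SimpleGraph V), Fintype.card V ≤ n → TreewidthLE G w →
    TreedepthLE G ((w + 1) * Nat.clog 2 (n + 1)) := by
  intro n
  induction n using Nat.strong_induction_on with
  | _ n IH =>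
    intro V _ _ G hcard hw
    by_cases hV : Nonempty V
    · haveI := hV
      have hm1 : 1 ≤ Fintype.card V := Fintype.card_pos
      have hn1 : 1 ≤ n := le_trans hm1 hcard
      obtain ⟨ι, T, bags, htd, hwidth⟩ := hw
      obtain ⟨i₀, hcent⟩ := centroid htd
      set S := bags i₀ with hSdef
      have hpart : ∀ u : V, u ∉ S → TreedepthLE (G.induce (cls G S u))
          ((w + 1) * Nat.clog 2 (n / 2 + 1)) := by
        intro u hu
        haveI : Fintype ↥(cls G S u) := Fintype.ofFinite _
        haveI : DecidableEq ↥(cls G S u) := Classical.decEq _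
        refine IH (n / 2) (Nat.div_lt_self (by omega) one_lt_two) _ (G.induce _) ?_ ?_
        · have hca : Fintype.card ↥(cls G S u) = (cls G S u).ncard := by
            rw [← Nat.card_coe_set_eq, Nat.card_eq_fintype_card]
          rw [hca]
          have hcc := hcent u hu
          have hscc : {v : V | AReach G S u v} = cls G S u := rfl
          rw [hscc] at hcc
          have h2 : 2 * (cls G S u).ncard ≤ n := le_trans hcc hcard
          omega
        · exact tw_restrict ⟨ι, T, bags, htd, hwidth⟩ _
      have hglue := glue G S _ hpart
      have harith : S.card + (w + 1) * Nat.clog 2 (n / 2 + 1) ≤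
          (w + 1) * Nat.clog 2 (n + 1) := by
        have hSc : S.card ≤ w + 1 := hwidth i₀
        have hclog : Nat.clog 2 (n + 1) = Nat.clog 2 (n / 2 + 1) + 1 := by
          rw [Nat.clog_of_two_le one_lt_two (by omega)]
          congr 2
          omega
        rw [hclog, Nat.mul_succ]
        omega
      exact td_mono hglue harith
    · have hVempty : IsEmpty V := not_nonempty_iff.mp hV
      refine ⟨Eq, ⟨fun v => rfl, fun u v w h1 h2 => h1.trans h2,
        fun u v h1 _ => h1, fun u v w h1 h2 => Or.inl (h1.trans h2.symm)⟩,
        fun u v h => (hVempty.elim u), ?_⟩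
      intro s _
      have hse : s = ∅ := Finset.eq_empty_of_isEmpty s
      simp [hse]

end Aux

/-- For a connected graph `G` on `n` vertices,
`td(G) ≤ (tw(G) + 1) · ⌈log₂ (n + 1)⌉`. -/
theorem treedepth_le_treewidth_mul_log {V : Type*} [Fintype V] [DecidableEq V]
    (G : SimpleGraph V) (hG : G.Connected) (w : ℕ) (hw : TreewidthLE G w) :
    TreedepthLE G ((w + 1) * Nat.clog 2 (Fintype.card V + 1)) := by
  exact main_td w (Fintype.card V) V G le_rfl hw
end

section
/- Let U be a set of size at most t², let S₁,…,S_l be disjoint blocks, and for each block S_i let cost_i : U → ℕ ∪ {∞} assign an extra cost to each subtree. Suppose an assignment σ maps each block to a distinct element of U minimizing the total cost ∑_i cost_i(σ(i)). Then there is such an optimal injective assignment in which each σ(i) is among the l elements of U with the l smallest values of cost_i. Hence keeping only the best l ≤ t values per block suffices to find a minimum-cost injective assignment. -/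
open scoped ENat

/-- The table-pruning rule of the polynomial-space branching algorithm: if `σ` is an
injective assignment of blocks to subtrees minimizing the total extra cost, and for each
block `i` the set `B i` consists of `min l |U|` subtrees with the smallest costs for
block `i`, then there is an optimal injective assignment choosing, for each block,
a subtree from `B i`. -/
theorem keep_best_l_values {U : Type*} [Fintype U] [DecidableEq U] (t l : ℕ)
    (hU : Fintype.card U ≤ t ^ 2) (hl : l ≤ t)
    (cost : Fin l → U → ℕ∞) (σ : Fin l ↪ U)
    (hopt : ∀ τ : Fin l ↪ U, ∑ i, cost i (σ i) ≤ ∑ i, cost i (τ i))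
    (B : Fin l → Finset U)
    (hBcard : ∀ i, (B i).card = min l (Fintype.card U))
    (hBmin : ∀ i, ∀ u ∈ B i, ∀ u' ∉ B i, cost i u ≤ cost i u') :
    ∃ σ' : Fin l ↪ U, (∀ i, σ' i ∈ B i) ∧
      ∑ i, cost i (σ' i) = ∑ i, cost i (σ i) := by
  have hcardU : l ≤ Fintype.card U := by
    simpa using Fintype.card_le_of_embedding σ
  have hB : ∀ i, (B i).card = l := fun i => by rw [hBcard i, min_eq_left hcardU]
  suffices H : ∀ n (σ : Fin l ↪ U),
      ((Finset.univ : Finset (Fin l)).filter (fun i => σ i ∉ B i)).card ≤ n →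
      (∀ τ : Fin l ↪ U, ∑ i, cost i (σ i) ≤ ∑ i, cost i (τ i)) →
      ∃ σ' : Fin l ↪ U, (∀ i, σ' i ∈ B i) ∧
        ∑ i, cost i (σ' i) = ∑ i, cost i (σ i) by
    exact H _ σ le_rfl hopt
  intro n
  induction n with
  | zero =>
      intro σ h hopt
      refine ⟨σ, fun i => ?_, rfl⟩
      by_contra hi
      have : i ∈ (Finset.univ : Finset (Fin l)).filter (fun i => σ i ∉ B i) := by
        simp [hi]
      have := Finset.card_pos.mpr ⟨i, this⟩
      omega
  | succ n ih =>
      intro σ h hopt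
      by_cases hall : ∀ i, σ i ∈ B i
      · exact ⟨σ, hall, rfl⟩
      push_neg at hall
      obtain ⟨i, hi⟩ := hall
      -- find u ∈ B i not used by σ on other indices
      have himg : ((Finset.univ.erase i).image σ).card < (B i).card := by
        rw [hB i, Finset.card_image_of_injective _ σ.injective,
          Finset.card_erase_of_mem (Finset.mem_univ i)]
        simp only [Finset.card_univ, Fintype.card_fin]
        have : 0 < l := i.pos
        omega
      obtain ⟨u, huB, hunotimg⟩ : ∃ u ∈ B i, u ∉ (Finset.univ.erase i).image σ := by
        by_contra hc
        push_neg at hc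
        exact absurd (Finset.card_le_card hc) (not_le.mpr himg)
      have hune : ∀ j, j ≠ i → σ j ≠ u := by
        intro j hj hσj
        exact hunotimg (Finset.mem_image.mpr ⟨j, Finset.mem_erase.mpr ⟨hj, Finset.mem_univ j⟩, hσj⟩)
      have huσi : u ≠ σ i := fun h => hi (h ▸ huB)
      -- new embedding
      have hinj : Function.Injective (Function.update (σ : Fin l → U) i u) := by
        intro a b hab
        by_cases ha : a = i <;> by_cases hb : b = i
        · rw [ha, hb]
        · rw [ha, Function.update_self, Function.update_of_ne hb] at hab
          exact absurd hab.symm (hune b hb)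
        · rw [hb, Function.update_self, Function.update_of_ne ha] at hab
          exact absurd hab (hune a ha)
        · rw [Function.update_of_ne ha, Function.update_of_ne hb] at hab
          exact σ.injective hab
      set σ' : Fin l ↪ U := ⟨Function.update (σ : Fin l → U) i u, hinj⟩ with hσ'def
      have hσ'i : σ' i = u := Function.update_self i u σ
      have hσ'j : ∀ j, j ≠ i → σ' j = σ j := fun j hj => Function.update_of_ne hj u σ
      -- cost comparison
      have hle : ∑ j, cost j (σ' j) ≤ ∑ j, cost j (σ j) := by
        rw [← Finset.add_sum_erase _ (fun j => cost j (σ' j)) (Finset.mem_univ i),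
          ← Finset.add_sum_erase _ (fun j => cost j (σ j)) (Finset.mem_univ i)]
        refine add_le_add ?_ (le_of_eq (Finset.sum_congr rfl fun j hj => ?_))
        · rw [hσ'i]; exact hBmin i u huB (σ i) hi
        · rw [hσ'j j (Finset.mem_erase.mp hj).1]
      have heq : ∑ j, cost j (σ' j) = ∑ j, cost j (σ j) :=
        le_antisymm hle (hopt σ')
      have hopt' : ∀ τ : Fin l ↪ U, ∑ j, cost j (σ' j) ≤ ∑ j, cost j (τ j) :=
        fun τ => heq ▸ hopt τ
      -- bad set shrinks
      have hbad : ((Finset.univ : Finset (Fin l)).filter (fun j => σ' j ∉ B j)).card ≤ n := by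
        have hsub : (Finset.univ : Finset (Fin l)).filter (fun j => σ' j ∉ B j) ⊆
            ((Finset.univ : Finset (Fin l)).filter (fun j => σ j ∉ B j)).erase i := by
          intro j hj
          simp only [Finset.mem_filter, Finset.mem_univ, true_and] at hj
          have hji : j ≠ i := by
            intro hji
            exact hj (by rw [hji, hσ'i]; exact huB)
          refine Finset.mem_erase.mpr ⟨hji, ?_⟩
          simp only [Finset.mem_filter, Finset.mem_univ, true_and]
          rwa [← hσ'j j hji]
        have hin : i ∈ (Finset.univ : Finset (Fin l)).filter (fun j => σ j ∉ B j) := by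
          simp [hi]
        have := Finset.card_le_card hsub
        rw [Finset.card_erase_of_mem hin] at this
        omega
      obtain ⟨σ'', hmem, hsum⟩ := ih σ' hbad hopt'
      exact ⟨σ'', hmem, hsum.trans heq⟩
end
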